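/- Let Σ be an n×n nonnegative matrix measure on ℝ, and let Ω_Σ := { f ∈ ℂⁿ : for every Borel set δ, ⟪Σ(δ)f, f⟫ = 0 implies Σ(δ) = 0 } be the set of vectors of maximal type for Σ. Then the complement ℂⁿ \ Ω_Σ has Lebesgue measure zero (with respect to the Lebesgue/Haar measure on ℂⁿ ≅ ℝ^{2n}). -/

import Mathlib

open MeasureTheory Matrix
open scoped ComplexOrder

namespace Stmt3Aux
variable {n : ℕ}

lemma vm_sum_apply {α M ι : Type*} [MeasurableSpace α] [AddCommMonoid M] [TopologicalSpace M]
    [ContinuousAdd M]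
    (s : Finset ι) (v : ι → VectorMeasure α M) (δ : Set α) :
    (∑ i ∈ s, v i) δ = ∑ i ∈ s, v i δ := by
  classical
  induction s using Finset.induction_on with
  | empty => simp
  | insert a s h ih => simp [Finset.sum_insert h, VectorMeasure.add_apply, ih]

lemma psd_zero_of_trace {A : Matrix (Fin n) (Fin n) ℂ} (hA : A.PosSemidef)
    (h : ∑ i, (A i i).re = 0) : A = 0 := by
  obtain ⟨B, rfl⟩ : ∃ B : Matrix (Fin n) (Fin n) ℂ, A = Bᴴ * B := by
    open scoped MatrixOrder in
    exact CStarAlgebra.nonneg_iff_eq_star_mul_self.mp hA.nonneg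
  have h1 : ∀ i, ((Bᴴ * B) i i).re = ∑ k, Complex.normSq (B k i) := by
    intro i
    simp [Matrix.mul_apply, Complex.normSq_apply, Complex.re_sum, Complex.mul_re,
      Matrix.conjTranspose_apply]
  have h2 : ∑ i, ∑ k, Complex.normSq (B k i) = 0 := by
    rw [← h]; exact Finset.sum_congr rfl fun i _ => (h1 i).symm
  have hB : B = 0 := by
    ext k i
    have := (Finset.sum_eq_zero_iff_of_nonneg (fun i _ => Finset.sum_nonneg
      (fun k _ => Complex.normSq_nonneg _))).mp h2 i (Finset.mem_univ i)
    have := (Finset.sum_eq_zero_iff_of_nonneg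
      (fun k _ => Complex.normSq_nonneg _)).mp this k (Finset.mem_univ k)
    simpa using Complex.normSq_eq_zero.mp this
  simp [hB]

lemma psd_diag_re_nonneg {A : Matrix (Fin n) (Fin n) ℂ} (hA : A.PosSemidef) (i : Fin n) :
    0 ≤ (A i i).re := by
  have h := hA.dotProduct_mulVec_nonneg (Pi.single i 1)
  have : star (Pi.single i 1 : Fin n → ℂ) ⬝ᵥ A *ᵥ Pi.single i 1 = A i i := by
    simp [dotProduct, Matrix.mulVec, Pi.single_apply, Finset.sum_ite_eq]
  rw [this] at h
  exact (Complex.le_def.mp h).1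

def entryReHom (i j : Fin n) : Matrix (Fin n) (Fin n) ℂ →+ ℝ :=
  AddMonoidHom.mk' (fun A => (A i j).re) (fun A B => by simp [Matrix.add_apply])

def entryImHom (i j : Fin n) : Matrix (Fin n) (Fin n) ℂ →+ ℝ :=
  AddMonoidHom.mk' (fun A => (A i j).im) (fun A B => by simp [Matrix.add_apply])

lemma continuous_entryReHom (i j : Fin n) : Continuous (entryReHom (n := n) i j) :=
  Complex.continuous_re.comp ((continuous_apply j).comp (continuous_apply i))

lemma continuous_entryImHom (i j : Fin n) : Continuous (entryImHom (n := n) i j) :=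
  Complex.continuous_im.comp ((continuous_apply j).comp (continuous_apply i))

variable (S : VectorMeasure ℝ (Matrix (Fin n) (Fin n) ℂ))

noncomputable def entryRe (i j : Fin n) : SignedMeasure ℝ :=
  S.mapRange (entryReHom i j) (continuous_entryReHom i j)

noncomputable def entryIm (i j : Fin n) : SignedMeasure ℝ :=
  S.mapRange (entryImHom i j) (continuous_entryImHom i j)

@[simp] lemma entryRe_apply (i j : Fin n) (δ : Set ℝ) : entryRe S i j δ = (S δ i j).re :=
  VectorMeasure.mapRange_apply _ _

@[simp] lemma entryIm_apply (i j : Fin n) (δ : Set ℝ) : entryIm S i j δ = (S δ i j).im :=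
  VectorMeasure.mapRange_apply _ _

noncomputable def trSM : SignedMeasure ℝ := ∑ i, entryRe S i i

lemma trSM_apply (δ : Set ℝ) : trSM S δ = ∑ i, (S δ i i).re := by
  simp [trSM, vm_sum_apply]

variable (hpos : ∀ δ : Set ℝ, MeasurableSet δ → (S δ).PosSemidef)
include hpos

lemma trSM_nonneg : (0 : VectorMeasure ℝ ℝ) ≤[Set.univ] trSM S := by
  refine (VectorMeasure.restrict_le_restrict_iff _ _ MeasurableSet.univ).mpr ?_
  intro j hj _
  rw [VectorMeasure.zero_apply, trSM_apply]
  exact Finset.sum_nonneg fun i _ => psd_diag_re_nonneg (hpos j hj) i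

/-- The trace measure. -/
noncomputable def mu : Measure ℝ :=
  (trSM S).toMeasureOfZeroLE Set.univ MeasurableSet.univ (trSM_nonneg S hpos)

instance : IsFiniteMeasure (mu S hpos) := by
  unfold mu; infer_instance

lemma mu_apply {δ : Set ℝ} (hδ : MeasurableSet δ) :
    mu S hpos δ = ENNReal.ofReal (trSM S δ) := by
  rw [mu, SignedMeasure.toMeasureOfZeroLE_apply _ _ _ hδ,
    ENNReal.ofReal_eq_coe_nnreal (by
      rw [trSM_apply]
      exact Finset.sum_nonneg fun i _ => psd_diag_re_nonneg (hpos δ hδ) i)]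
  exact ENNReal.coe_inj.mpr (Subtype.ext
    (show trSM S (Set.univ ∩ δ) = trSM S δ by rw [Set.univ_inter]))

lemma S_eq_zero_of_mu {δ : Set ℝ} (hδ : MeasurableSet δ) (h : mu S hpos δ = 0) : S δ = 0 := by
  rw [mu_apply S hpos hδ, ENNReal.ofReal_eq_zero, trSM_apply] at h
  refine psd_zero_of_trace (hpos δ hδ) (le_antisymm h ?_)
  exact Finset.sum_nonneg fun i _ => psd_diag_re_nonneg (hpos δ hδ) i

lemma entryRe_ac (i j : Fin n) :
    entryRe S i j ≪ᵥ (mu S hpos).toENNRealVectorMeasure := by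
  refine VectorMeasure.AbsolutelyContinuous.mk fun δ hδ h0 => ?_
  rw [Measure.toENNRealVectorMeasure_apply_measurable hδ] at h0
  rw [entryRe_apply, S_eq_zero_of_mu S hpos hδ h0]; simp

lemma entryIm_ac (i j : Fin n) :
    entryIm S i j ≪ᵥ (mu S hpos).toENNRealVectorMeasure := by
  refine VectorMeasure.AbsolutelyContinuous.mk fun δ hδ h0 => ?_
  rw [Measure.toENNRealVectorMeasure_apply_measurable hδ] at h0
  rw [entryIm_apply, S_eq_zero_of_mu S hpos hδ h0]; simp

noncomputable def uD (i j : Fin n) : ℝ → ℝ := (entryRe S i j).rnDeriv (mu S hpos)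
noncomputable def vD (i j : Fin n) : ℝ → ℝ := (entryIm S i j).rnDeriv (mu S hpos)

lemma setIntegral_uD (i j : Fin n) {δ : Set ℝ} (hδ : MeasurableSet δ) :
    ∫ t in δ, uD S hpos i j t ∂(mu S hpos) = (S δ i j).re := by
  have := SignedMeasure.withDensityᵥ_rnDeriv_eq (entryRe S i j) (mu S hpos)
    (entryRe_ac S hpos i j)
  rw [← entryRe_apply S i j δ, ← this,
    withDensityᵥ_apply (SignedMeasure.integrable_rnDeriv _ _) hδ]
  rfl

lemma setIntegral_vD (i j : Fin n) {δ : Set ℝ} (hδ : MeasurableSet δ) :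
    ∫ t in δ, vD S hpos i j t ∂(mu S hpos) = (S δ i j).im := by
  have := SignedMeasure.withDensityᵥ_rnDeriv_eq (entryIm S i j) (mu S hpos)
    (entryIm_ac S hpos i j)
  rw [← entryIm_apply S i j δ, ← this,
    withDensityᵥ_apply (SignedMeasure.integrable_rnDeriv _ _) hδ]
  rfl


/-- The quadratic density. -/
noncomputable def q (t : ℝ) (f : Fin n → ℂ) : ℝ :=
  ∑ i, ∑ j, ((starRingEnd ℂ (f i) * f j).re * uD S hpos i j t
    - (starRingEnd ℂ (f i) * f j).im * vD S hpos i j t)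

omit hpos in
lemma quad_re (A : Matrix (Fin n) (Fin n) ℂ) (f : Fin n → ℂ) :
    (star f ⬝ᵥ A *ᵥ f).re
      = ∑ i, ∑ j, ((starRingEnd ℂ (f i) * f j).re * (A i j).re
          - (starRingEnd ℂ (f i) * f j).im * (A i j).im) := by
  simp only [dotProduct, Matrix.mulVec, Pi.star_apply, Finset.mul_sum, Complex.re_sum]
  refine Finset.sum_congr rfl fun i _ => Finset.sum_congr rfl fun j _ => ?_
  simp only [Complex.star_def, Complex.mul_re, Complex.mul_im, Complex.conj_re, Complex.conj_im]
  ring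

lemma integrable_q (f : Fin n → ℂ) : Integrable (fun t => q S hpos t f) (mu S hpos) := by
  refine integrable_finset_sum _ fun i _ => integrable_finset_sum _ fun j _ => ?_
  exact ((SignedMeasure.integrable_rnDeriv _ _).const_mul _).sub
    ((SignedMeasure.integrable_rnDeriv _ _).const_mul _)

lemma measurable_q (f : Fin n → ℂ) : Measurable (fun t => q S hpos t f) := by
  refine Finset.measurable_sum _ fun i _ => Finset.measurable_sum _ fun j _ => ?_
  exact ((SignedMeasure.measurable_rnDeriv _ _).const_mul _).sub
    ((SignedMeasure.measurable_rnDeriv _ _).const_mul _)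

lemma measurable_q2 : Measurable (fun p : ℝ × (Fin n → ℂ) => q S hpos p.1 p.2) := by
  refine Finset.measurable_sum _ fun i _ => Finset.measurable_sum _ fun j _ => ?_
  refine Measurable.sub (Measurable.mul ?_ ?_) (Measurable.mul ?_ ?_)
  · exact (Complex.measurable_re.comp
      ((Complex.continuous_conj.measurable.comp ((measurable_pi_apply i).comp measurable_snd)).mul
        ((measurable_pi_apply j).comp measurable_snd)))
  · exact (SignedMeasure.measurable_rnDeriv _ _).comp measurable_fst
  · exact (Complex.measurable_im.comp
      ((Complex.continuous_conj.measurable.comp ((measurable_pi_apply i).comp measurable_snd)).mul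
        ((measurable_pi_apply j).comp measurable_snd)))
  · exact (SignedMeasure.measurable_rnDeriv _ _).comp measurable_fst

lemma continuous_q (t : ℝ) : Continuous (fun f : Fin n → ℂ => q S hpos t f) := by
  refine continuous_finset_sum _ fun i _ => continuous_finset_sum _ fun j _ => ?_
  refine Continuous.sub (Continuous.mul ?_ continuous_const)
    (Continuous.mul ?_ continuous_const)
  · exact Complex.continuous_re.comp
      ((continuous_star.comp (continuous_apply i)).mul (continuous_apply j))
  · exact Complex.continuous_im.comp
      ((continuous_star.comp (continuous_apply i)).mul (continuous_apply j))

lemma setIntegral_q (f : Fin n → ℂ) {δ : Set ℝ} (hδ : MeasurableSet δ) :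
    ∫ t in δ, q S hpos t f ∂(mu S hpos) = (star f ⬝ᵥ S δ *ᵥ f).re := by
  rw [quad_re]
  unfold q
  rw [integral_finset_sum _ (fun i _ => ?_)]
  · refine Finset.sum_congr rfl fun i _ => ?_
    rw [integral_finset_sum _ (fun j _ => ?_)]
    · refine Finset.sum_congr rfl fun j _ => ?_
      rw [integral_sub, integral_const_mul, integral_const_mul,
        setIntegral_uD S hpos i j hδ, setIntegral_vD S hpos i j hδ]
      · exact ((SignedMeasure.integrable_rnDeriv _ _).const_mul _).integrableOn
      · exact ((SignedMeasure.integrable_rnDeriv _ _).const_mul _).integrableOn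
    · exact (((SignedMeasure.integrable_rnDeriv _ _).const_mul _).sub
        ((SignedMeasure.integrable_rnDeriv _ _).const_mul _)).integrableOn
  · refine integrable_finset_sum _ fun j _ => ?_
    exact (((SignedMeasure.integrable_rnDeriv _ _).const_mul _).sub
      ((SignedMeasure.integrable_rnDeriv _ _).const_mul _)).integrableOn

lemma q_ae_nonneg (f : Fin n → ℂ) : 0 ≤ᵐ[mu S hpos] fun t => q S hpos t f := by
  refine ae_nonneg_of_forall_setIntegral_nonneg (integrable_q S hpos f) fun s hs _ => ?_
  rw [setIntegral_q S hpos f hs]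
  exact (Complex.le_def.mp ((hpos s hs).dotProduct_mulVec_nonneg f)).1


lemma q_parallelogram (t : ℝ) (f g : Fin n → ℂ) :
    q S hpos t (f + g) + q S hpos t (f - g) = 2 * q S hpos t f + 2 * q S hpos t g := by
  unfold q
  rw [← Finset.sum_add_distrib, Finset.mul_sum, Finset.mul_sum, ← Finset.sum_add_distrib]
  refine Finset.sum_congr rfl fun i _ => ?_
  rw [← Finset.sum_add_distrib, Finset.mul_sum, Finset.mul_sum, ← Finset.sum_add_distrib]
  refine Finset.sum_congr rfl fun j _ => ?_
  simp only [Pi.add_apply, Pi.sub_apply, map_add, map_sub, add_mul, mul_add, sub_mul, mul_sub,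
    Complex.add_re, Complex.add_im, Complex.sub_re, Complex.sub_im]
  ring

lemma q_smul (t : ℝ) (r : ℝ) (f : Fin n → ℂ) :
    q S hpos t (r • f) = r ^ 2 * q S hpos t f := by
  unfold q
  simp only [Finset.mul_sum]
  refine Finset.sum_congr rfl fun i _ => ?_
  refine Finset.sum_congr rfl fun j _ => ?_
  simp only [Pi.smul_apply, Complex.real_smul, _root_.map_mul, Complex.conj_ofReal,
    Complex.mul_re, Complex.mul_im, Complex.ofReal_re, Complex.ofReal_im]
  ring

lemma q_zero (t : ℝ) : q S hpos t 0 = 0 := by simp [q]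

/-- The zero set of the quadratic form, as a real submodule (assuming nonnegativity). -/
noncomputable def zeroSub (t : ℝ) (hq : ∀ f, 0 ≤ q S hpos t f) : Submodule ℝ (Fin n → ℂ) where
  carrier := {f | q S hpos t f = 0}
  zero_mem' := q_zero S hpos t
  add_mem' := by
    intro f g hf hg
    have hpar := q_parallelogram S hpos t f g
    have h1 := hq (f + g)
    have h2 := hq (f - g)
    simp only [Set.mem_setOf_eq] at hf hg ⊢
    linarith
  smul_mem' := by
    intro r f hf
    simp only [Set.mem_setOf_eq] at hf ⊢
    rw [q_smul, hf, mul_zero]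


lemma q_single (t : ℝ) (i : Fin n) : q S hpos t (Pi.single i 1) = uD S hpos i i t := by
  unfold q
  simp [Pi.single_apply, apply_ite (starRingEnd ℂ), ite_mul, mul_ite, apply_ite Complex.re,
    apply_ite Complex.im, Finset.sum_ite_eq']

end Stmt3Aux

/-- The set of vectors of maximal type for an `n × n` nonnegative matrix measure `S`:
those `f ∈ ℂⁿ` such that the scalar measure `μ_f : δ ↦ ⟪S(δ)f, f⟫ = f* S(δ) f`
is equivalent to `S` (since `μ_f ≪ S` always holds, this means
`⟪S(δ)f, f⟫ = 0 → S(δ) = 0`). -/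
def maximalTypeSet (n : ℕ) (S : VectorMeasure ℝ (Matrix (Fin n) (Fin n) ℂ)) :
    Set (Fin n → ℂ) :=
  {f | ∀ δ : Set ℝ, MeasurableSet δ → star f ⬝ᵥ (S δ) *ᵥ f = 0 → S δ = 0}

/-- **Theorem 3(b), finite-dimensional case.** For a nonnegative matrix measure `S`,
the complement of the set `Ω_S` of vectors of maximal type has Lebesgue (Haar)
measure zero in `ℂⁿ ≅ ℝ^{2n}`. -/
theorem stmt_3 (n : ℕ)
    (S : VectorMeasure ℝ (Matrix (Fin n) (Fin n) ℂ))
    (hpos : ∀ δ : Set ℝ, MeasurableSet δ → (S δ).PosSemidef) :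
    volume (maximalTypeSet n S)ᶜ = 0 := by
  classical
  open Stmt3Aux in
  set μ := Stmt3Aux.mu S hpos with hμ
  set Q := Stmt3Aux.q S hpos with hQ
  let d : ℕ → (Fin n → ℂ) := TopologicalSpace.denseSeq (Fin n → ℂ)
  have hd : DenseRange d := TopologicalSpace.denseRange_denseSeq _
  set G : Set ℝ := ⋂ k, {t | 0 ≤ Q t (d k)} with hG
  have hGmeas : MeasurableSet G := MeasurableSet.iInter fun k =>
    measurableSet_le measurable_const (Stmt3Aux.measurable_q S hpos (d k))
  have hGc : μ Gᶜ = 0 := by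
    rw [hG, Set.compl_iInter]
    refine measure_iUnion_null fun k => ?_
    have h1 := Stmt3Aux.q_ae_nonneg S hpos (d k)
    have h2 : μ {t | ¬ (0:ℝ) ≤ Q t (d k)} = 0 := by
      simpa [Filter.EventuallyLE, ae_iff] using h1
    simpa [Set.compl_setOf] using h2
  have hGq : ∀ t ∈ G, ∀ f, 0 ≤ Q t f := by
    intro t ht f
    have hcl : IsClosed {g : Fin n → ℂ | 0 ≤ Q t g} :=
      isClosed_le continuous_const (Stmt3Aux.continuous_q S hpos t)
    have hsub : Set.range d ⊆ {g : Fin n → ℂ | 0 ≤ Q t g} := by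
      rintro _ ⟨k, rfl⟩
      exact Set.mem_iInter.mp ht k
    have hfmem : f ∈ closure (Set.range d) := by
      rw [hd.closure_range]; trivial
    exact (hcl.closure_subset_iff.mpr hsub) hfmem
  set T : Set ℝ := G ∩ ⋂ k, {t | Q t (d k) = 0} with hT
  have hTmeas : MeasurableSet T := hGmeas.inter (MeasurableSet.iInter fun k =>
    measurableSet_eq_fun (Stmt3Aux.measurable_q S hpos (d k)) measurable_const)
  have hTq : ∀ t ∈ T, ∀ f, Q t f = 0 := by
    intro t ht f
    have hcl : IsClosed {g : Fin n → ℂ | Q t g = 0} :=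
      isClosed_eq (Stmt3Aux.continuous_q S hpos t) continuous_const
    have hsub : Set.range d ⊆ {g : Fin n → ℂ | Q t g = 0} := by
      rintro _ ⟨k, rfl⟩
      exact Set.mem_iInter.mp ht.2 k
    have hfmem : f ∈ closure (Set.range d) := by
      rw [hd.closure_range]; trivial
    exact (hcl.closure_subset_iff.mpr hsub) hfmem
  have hT0 : μ T = 0 := by
    have hdiag : ∀ i, (S T i i).re = 0 := by
      intro i
      rw [← Stmt3Aux.setIntegral_uD S hpos i i hTmeas]
      calc ∫ t in T, Stmt3Aux.uD S hpos i i t ∂μ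
          = ∫ t in T, (0:ℝ) ∂μ := by
            refine setIntegral_congr_fun hTmeas fun t ht => ?_
            rw [← Stmt3Aux.q_single S hpos t i]
            exact hTq t ht _
        _ = 0 := by simp
    rw [hμ, Stmt3Aux.mu_apply S hpos hTmeas, Stmt3Aux.trSM_apply]
    simp [hdiag]
  set B : Set (ℝ × (Fin n → ℂ)) := ((G \ T) ×ˢ Set.univ) ∩ {p | Q p.1 p.2 = 0} with hB
  have hBmeas : MeasurableSet B := ((hGmeas.diff hTmeas).prod MeasurableSet.univ).inter
    (measurableSet_eq_fun (Stmt3Aux.measurable_q2 S hpos) measurable_const)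
  have hBzero : (μ.prod volume) B = 0 := by
    rw [Measure.prod_apply hBmeas]
    have h0 : ∀ t, volume (Prod.mk t ⁻¹' B) = 0 := by
      intro t
      by_cases ht : t ∈ G \ T
      · have hsec : Prod.mk t ⁻¹' B = {g : Fin n → ℂ | Q t g = 0} := by
          ext g; simp [hB, ht]
        obtain ⟨k, hk⟩ : ∃ k, Q t (d k) ≠ 0 := by
          by_contra hcon
          push_neg at hcon
          exact ht.2 ⟨ht.1, Set.mem_iInter.mpr fun k => hcon k⟩
        have hne : Stmt3Aux.zeroSub S hpos t (hGq t ht.1) ≠ ⊤ := by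
          intro hcon
          exact hk (Submodule.eq_top_iff'.mp hcon (d k))
        have hnull := MeasureTheory.Measure.addHaar_submodule (volume : Measure (Fin n → ℂ))
          (Stmt3Aux.zeroSub S hpos t (hGq t ht.1)) hne
        rw [hsec]
        exact hnull
      · have hsec : Prod.mk t ⁻¹' B = ∅ := by
          ext g; simp [hB, ht]
        simp [hsec]
    simp only [h0]
    exact lintegral_zero
  have hae : ∀ᵐ f ∂(volume : Measure (Fin n → ℂ)), μ ((fun t => (t, f)) ⁻¹' B) = 0 := by
    have hsym : ∫⁻ f, μ ((fun t => (t, f)) ⁻¹' B) ∂volume = 0 := by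
      rw [← Measure.prod_apply_symm hBmeas]
      exact hBzero
    have := (lintegral_eq_zero_iff (measurable_measure_prodMk_right hBmeas)).mp hsym
    filter_upwards [this] with f hf using hf
  have hsubset : {f : Fin n → ℂ | μ ((fun t => (t, f)) ⁻¹' B) = 0} ⊆ maximalTypeSet n S := by
    intro f hf δ hδ hzero
    refine Stmt3Aux.S_eq_zero_of_mu S hpos hδ ?_
    have hint0 : ∫ t in δ, Q t f ∂μ = 0 := by
      rw [hQ, Stmt3Aux.setIntegral_q S hpos f hδ, hzero]
      simp
    have hnn : 0 ≤ᵐ[μ.restrict δ] fun t => Q t f :=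
      ae_restrict_of_ae (Stmt3Aux.q_ae_nonneg S hpos f)
    have haez : (fun t => Q t f) =ᵐ[μ.restrict δ] 0 :=
      (setIntegral_eq_zero_iff_of_nonneg_ae hnn
        (Stmt3Aux.integrable_q S hpos f).integrableOn).mp hint0
    have hD : μ ({t | Q t f ≠ 0} ∩ δ) = 0 := by
      have h1 := ae_iff.mp haez
      rwa [Measure.restrict_apply₀ (by
        exact (measurableSet_eq_fun (Stmt3Aux.measurable_q S hpos f)
          measurable_const).compl.nullMeasurableSet)] at h1
    have hcover : δ ⊆ (((fun t => (t, f)) ⁻¹' B) ∪ Gᶜ ∪ T) ∪ ({t | Q t f ≠ 0} ∩ δ) := by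
      intro t htδ
      by_cases hq0 : Q t f = 0
      · by_cases htG : t ∈ G
        · by_cases htT : t ∈ T
          · exact Or.inl (Or.inr htT)
          · refine Or.inl (Or.inl (Or.inl ?_))
            exact ⟨⟨⟨htG, htT⟩, Set.mem_univ f⟩, hq0⟩
        · exact Or.inl (Or.inl (Or.inr htG))
      · exact Or.inr ⟨hq0, htδ⟩
    exact measure_mono_null hcover
      (measure_union_null (measure_union_null (measure_union_null hf hGc) hT0) hD)
  refine measure_mono_null (fun f hf => ?_) (ae_iff.mp hae)
  exact fun hP => hf (hsubset hP)
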